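/- For the permuted difference cycle 1 2 4 ... 2^k on n = 2^{k+1} - 1 vertices, the total number of top-dimensional simplices is k! · (2^{k+1} - 1), namely k! permutation classes each generating a full cyclic orbit of length n. -/

import Mathlib

private def Fsum (k : ℕ) (π : Equiv.Perm (Fin k)) (i : Fin (k + 1)) : ℕ :=
  ∑ l ∈ Finset.univ.filter (fun l : Fin k => (l : ℕ) < (i : ℕ)), 2 ^ ((π l : ℕ))

private lemma sum_univ_pow (k : ℕ) (π : Equiv.Perm (Fin k)) :
    ∑ l : Fin k, 2 ^ ((π l : ℕ)) = 2 ^ k - 1 := by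
  rw [Equiv.sum_comp π (fun m : Fin k => 2 ^ (m : ℕ)), Fin.sum_univ_eq_sum_range]
  clear π
  induction k with
  | zero => simp
  | succ m ih =>
      rw [Finset.sum_range_succ, ih]
      have : 0 < 2 ^ m := Nat.pow_pos (by norm_num)
      rw [pow_succ]; omega

private lemma Fsum_le (k : ℕ) (π : Equiv.Perm (Fin k)) (i : Fin (k + 1)) :
    Fsum k π i ≤ 2 ^ k - 1 := by
  rw [← sum_univ_pow k π]
  exact Finset.sum_le_sum_of_subset (Finset.filter_subset _ _)

private lemma Fsum_strictMono (k : ℕ) (π : Equiv.Perm (Fin k)) : StrictMono (Fsum k π) := by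
  intro i i' hii
  have hii' : (i : ℕ) < (i' : ℕ) := hii
  have hik : (i : ℕ) < k := lt_of_lt_of_le hii' (Nat.lt_succ_iff.1 i'.isLt)
  apply Finset.sum_lt_sum_of_subset (i := (⟨(i : ℕ), hik⟩ : Fin k))
  · intro x hx
    simp only [Finset.mem_filter, Finset.mem_univ, true_and] at hx ⊢
    omega
  · simp only [Finset.mem_filter, Finset.mem_univ, true_and]; exact hii'
  · simp
  · exact Nat.pow_pos (by norm_num)
  · intro j _ _; exact Nat.zero_le _

private lemma Fsum_zero (k : ℕ) (π : Equiv.Perm (Fin k)) : Fsum k π 0 = 0 := by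
  simp [Fsum]

private lemma Fsum_succ (k : ℕ) (π : Equiv.Perm (Fin k)) (l : Fin k) :
    Fsum k π l.succ = Fsum k π l.castSucc + 2 ^ ((π l : ℕ)) := by
  unfold Fsum
  have hset : Finset.univ.filter (fun x : Fin k => (x : ℕ) < ((l.succ : Fin (k+1)) : ℕ)) =
      insert l (Finset.univ.filter (fun x : Fin k => (x : ℕ) < ((l.castSucc : Fin (k+1)) : ℕ))) := by
    ext x
    simp only [Finset.mem_filter, Finset.mem_univ, true_and, Finset.mem_insert,
      Fin.val_succ, Fin.coe_castSucc]
    constructor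
    · intro hx
      rcases Nat.lt_succ_iff_lt_or_eq.1 hx with h | h
      · exact Or.inr h
      · exact Or.inl (Fin.ext h)
    · rintro (rfl | h)
      · omega
      · omega
  rw [hset, Finset.sum_insert (by simp)]
  ring

private lemma Fsum_cast (k n : ℕ) (π : Equiv.Perm (Fin k)) (i : Fin (k + 1)) :
    (∑ l ∈ Finset.univ.filter (fun l : Fin k => (l : ℕ) < (i : ℕ)),
      (2 : ZMod n) ^ ((π l : ℕ))) = ((Fsum k π i : ℕ) : ZMod n) := by
  unfold Fsum
  push_cast
  rfl

/-- For the permcycle 1 2 4 ... 2^k on n = 2^(k+1)-1 vertices: distinct pairs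
(π, j) of a permutation of the first k entries and a starting vertex give
distinct simplices, and the number of such pairs is k!·(2^(k+1)-1). -/
theorem stmt14 (k n : ℕ) (hk : 1 ≤ k) (hn : n = 2 ^ (k + 1) - 1) [NeZero n] :
    Function.Injective (fun p : Equiv.Perm (Fin k) × ZMod n =>
      Finset.image (fun i : Fin (k + 1) =>
        p.2 + ∑ l ∈ Finset.univ.filter (fun l : Fin k => (l : ℕ) < (i : ℕ)),
          (2 : ZMod n) ^ ((p.1 l : ℕ))) Finset.univ) ∧
    Fintype.card (Equiv.Perm (Fin k) × ZMod n) =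
      Nat.factorial k * (2 ^ (k + 1) - 1) := by
  have h2k : 0 < 2 ^ k := Nat.pow_pos (by norm_num)
  have hFn : ∀ (π : Equiv.Perm (Fin k)) (i : Fin (k + 1)), Fsum k π i < n := by
    intro π i
    have := Fsum_le k π i
    rw [hn, pow_succ]
    omega
  constructor
  · rintro ⟨π, j⟩ ⟨π', j'⟩ h
    simp only [Fsum_cast k n] at h
    -- h : Finset.image (fun i => j + ↑(Fsum k π i)) univ = image (fun i => j' + ↑(Fsum k π' i)) univ
    have hmem1 : ∀ i : Fin (k + 1), ∃ i' : Fin (k + 1),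
        j + ((Fsum k π i : ℕ) : ZMod n) = j' + ((Fsum k π' i' : ℕ) : ZMod n) := by
      intro i
      have : j + ((Fsum k π i : ℕ) : ZMod n) ∈
          Finset.image (fun i : Fin (k+1) => j' + ((Fsum k π' i : ℕ) : ZMod n)) Finset.univ := by
        rw [← h]; exact Finset.mem_image_of_mem _ (Finset.mem_univ i)
      obtain ⟨i', _, hi'⟩ := Finset.mem_image.1 this
      exact ⟨i', hi'.symm⟩
    have hmem2 : ∀ i : Fin (k + 1), ∃ i' : Fin (k + 1),
        j' + ((Fsum k π' i : ℕ) : ZMod n) = j + ((Fsum k π i' : ℕ) : ZMod n) := by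
      intro i
      have : j' + ((Fsum k π' i : ℕ) : ZMod n) ∈
          Finset.image (fun i : Fin (k+1) => j + ((Fsum k π i : ℕ) : ZMod n)) Finset.univ := by
        rw [h]; exact Finset.mem_image_of_mem _ (Finset.mem_univ i)
      obtain ⟨i', _, hi'⟩ := Finset.mem_image.1 this
      exact ⟨i', hi'.symm⟩
    -- Step A : j = j'
    obtain ⟨a, ha⟩ := hmem1 0
    obtain ⟨b, hb⟩ := hmem2 0
    rw [Fsum_zero] at ha hb
    simp only [Nat.cast_zero, add_zero] at ha hb
    have hsum0 : ((Fsum k π' a + Fsum k π b : ℕ) : ZMod n) = 0 := by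
      push_cast
      have h1 : j = j' + ((Fsum k π' a : ℕ) : ZMod n) := ha
      have h2 : j' = j + ((Fsum k π b : ℕ) : ZMod n) := hb
      rw [h2] at h1
      linear_combination -h1
    have hdvd : n ∣ Fsum k π' a + Fsum k π b := (ZMod.natCast_eq_zero_iff _ _).1 hsum0
    have hlt : Fsum k π' a + Fsum k π b < n := by
      have := Fsum_le k π' a
      have := Fsum_le k π b
      rw [hn, pow_succ]
      omega
    have hzero : Fsum k π' a + Fsum k π b = 0 := by
      rcases Nat.eq_zero_or_pos (Fsum k π' a + Fsum k π b) with h0 | hpos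
      · exact h0
      · exact absurd (Nat.le_of_dvd hpos hdvd) (not_le.2 hlt)
    have hFa : Fsum k π' a = 0 := by omega
    have hj : j = j' := by rw [ha, hFa]; simp
    subst hj
    -- Step B : π = π'
    have hA : Finset.image (Fsum k π) Finset.univ = Finset.image (Fsum k π') Finset.univ := by
      ext x
      simp only [Finset.mem_image, Finset.mem_univ, true_and]
      constructor
      · rintro ⟨i, rfl⟩
        obtain ⟨i', hi'⟩ := hmem1 i
        have hcast : ((Fsum k π i : ℕ) : ZMod n) = ((Fsum k π' i' : ℕ) : ZMod n) := by
          exact add_left_cancel hi'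
        have := congrArg ZMod.val hcast
        rw [ZMod.val_cast_of_lt (hFn π i), ZMod.val_cast_of_lt (hFn π' i')] at this
        exact ⟨i', this.symm⟩
      · rintro ⟨i, rfl⟩
        obtain ⟨i', hi'⟩ := hmem2 i
        have hcast : ((Fsum k π' i : ℕ) : ZMod n) = ((Fsum k π i' : ℕ) : ZMod n) := by
          exact add_left_cancel hi'
        have := congrArg ZMod.val hcast
        rw [ZMod.val_cast_of_lt (hFn π' i), ZMod.val_cast_of_lt (hFn π i')] at this
        exact ⟨i', this.symm⟩
    have hcard : (Finset.image (Fsum k π) Finset.univ).card = k + 1 := by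
      rw [Finset.card_image_of_injective _ (Fsum_strictMono k π).injective,
        Finset.card_univ, Fintype.card_fin]
    have hcard' : (Finset.image (Fsum k π') Finset.univ).card = k + 1 := by
      rw [← hA]; exact hcard
    have he1 : Fsum k π = (Finset.image (Fsum k π) Finset.univ).orderEmbOfFin hcard :=
      Finset.orderEmbOfFin_unique hcard
        (fun x => Finset.mem_image_of_mem _ (Finset.mem_univ x)) (Fsum_strictMono k π)
    have he2 : Fsum k π' = (Finset.image (Fsum k π) Finset.univ).orderEmbOfFin hcard := by
      refine Finset.orderEmbOfFin_unique hcard ?_ (Fsum_strictMono k π')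
      intro x
      rw [hA]
      exact Finset.mem_image_of_mem _ (Finset.mem_univ x)
    have hF : Fsum k π = Fsum k π' := he1.trans he2.symm
    have hπ : π = π' := by
      ext l
      have h1 := Fsum_succ k π l
      have h2 := Fsum_succ k π' l
      rw [hF] at h1
      rw [h1] at h2
      have hpow : 2 ^ ((π l : ℕ)) = 2 ^ ((π' l : ℕ)) := by omega
      exact Nat.pow_right_injective (le_refl 2) hpow
    exact Prod.ext hπ rfl
  · rw [Fintype.card_prod, Fintype.card_perm, Fintype.card_fin, ZMod.card, hn]
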